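/- Let G be a beer graph with an edge (u,v), and suppose the vertex set V of G is the union of sets V₁ and V₂ with V₁ ∩ V₂ = {u,v}, such that no edge of G joins a vertex of V₁ \ {u,v} to a vertex of V₂ \ {u,v}. Let G₁ and G₂ be the induced subgraphs of G on V₁ and V₂ (each containing the edge (u,v)), with beer stores B ∩ V₁ and B ∩ V₂ respectively. If dist(u,v) = ω(u,v) in G, then dist_B(u,v) = min( dist_B(u,v,G₁) , dist_B(u,v,G₂) ) and dist_B(u,u) = min( dist_B(u,u,G₁) , dist_B(u,u,G₂) ). -/

import Mathlib

open scoped ENNReal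

/-- The weight of a walk: the sum, with multiplicity, of the weights of its edges. -/
noncomputable def walkWeight {V : Type*} (ω : V → V → ℝ≥0∞) {G : SimpleGraph V}
    {u v : V} (p : G.Walk u v) : ℝ≥0∞ :=
  (p.darts.map fun d => ω d.toProd.1 d.toProd.2).sum

/-- The (weighted) distance: the infimum in ℝ≥0∞ of the weights of all walks. -/
noncomputable def gDist {V : Type*} (G : SimpleGraph V) (ω : V → V → ℝ≥0∞) (u v : V) : ℝ≥0∞ :=
  ⨅ p : G.Walk u v, walkWeight ω p

/-- The beer distance: the infimum in ℝ≥0∞ of the weights of all walks visiting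
a vertex of `B`. -/
noncomputable def beerDist {V : Type*} (G : SimpleGraph V) (ω : V → V → ℝ≥0∞)
    (B : Set V) (u v : V) : ℝ≥0∞ :=
  ⨅ (p : G.Walk u v) (_ : ∃ b ∈ B, b ∈ p.support), walkWeight ω p

/-- The subgraph of G induced by a set S of vertices (kept on the same vertex type):
its edges are the edges of G with both endpoints in S. -/
def restrictGraph {V : Type*} (G : SimpleGraph V) (S : Set V) : SimpleGraph V where
  Adj a b := G.Adj a b ∧ a ∈ S ∧ b ∈ S
  symm := ⟨fun a b h => ⟨h.1.symm, h.2.2, h.2.1⟩⟩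
  loopless := ⟨fun a h => G.irrefl h.1⟩

open SimpleGraph

@[simp] lemma walkWeight_nil {V : Type*} (ω : V → V → ℝ≥0∞) {G : SimpleGraph V} {u : V} :
    walkWeight ω (Walk.nil : G.Walk u u) = 0 := rfl

@[simp] lemma walkWeight_cons {V : Type*} (ω : V → V → ℝ≥0∞) {G : SimpleGraph V}
    {a b c : V} (h : G.Adj a b) (p : G.Walk b c) :
    walkWeight ω (Walk.cons h p) = ω a b + walkWeight ω p := by
  simp [walkWeight]

lemma walkWeight_append {V : Type*} (ω : V → V → ℝ≥0∞) {G : SimpleGraph V}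
    {a b c : V} (p : G.Walk a b) (q : G.Walk b c) :
    walkWeight ω (p.append q) = walkWeight ω p + walkWeight ω q := by
  induction p with
  | nil => simp
  | cons h p ih => simp [ih, add_assoc]

lemma walkWeight_reverse {V : Type*} (ω : V → V → ℝ≥0∞) (hsymm : ∀ a b, ω a b = ω b a)
    {G : SimpleGraph V} {a b : V} (p : G.Walk a b) :
    walkWeight ω p.reverse = walkWeight ω p := by
  induction p with
  | nil => simp
  | cons h p ih =>
    rename_i x y z
    rw [Walk.reverse_cons, walkWeight_append, ih]
    simp only [walkWeight_cons, walkWeight_nil, add_zero]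
    rw [hsymm y x, add_comm]

lemma walkWeight_mapLe {V : Type*} (ω : V → V → ℝ≥0∞) {G G' : SimpleGraph V}
    (hle : G ≤ G') {a b : V} (p : G.Walk a b) :
    walkWeight ω (p.mapLe hle) = walkWeight ω p := by
  induction p with
  | nil => rfl
  | cons h p ih =>
    simp only [Walk.mapLe, Walk.map_cons] at ih ⊢
    rw [walkWeight_cons, walkWeight_cons, ih]
    rfl

lemma support_mapLe {V : Type*} {G G' : SimpleGraph V}
    (hle : G ≤ G') {a b : V} (p : G.Walk a b) :
    (p.mapLe hle).support = p.support := by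
  simp only [Walk.mapLe, Walk.support_map]
  exact List.map_id _

/-- First re-entry into `S`: split a walk starting outside `S` and ending in `S`
at its first vertex in `S`; that vertex lies in `T` by the crossing hypothesis. -/
lemma reach_first {V : Type*} {G : SimpleGraph V} (ω : V → V → ℝ≥0∞)
    (S T : Set V) (hT : ∀ a b, G.Adj a b → a ∉ S → b ∈ S → b ∈ T) :
    ∀ {w y : V} (p : G.Walk w y), w ∉ S → y ∈ S →
      ∃ z, z ∈ T ∧ z ∈ S ∧ ∃ (r : G.Walk w z) (q : G.Walk z y),
        walkWeight ω p = walkWeight ω r + walkWeight ω q ∧ q.length ≤ p.length ∧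
        ∀ b, b ∈ S → b ∈ p.support → b ∈ q.support := by
  intro w y p
  induction p with
  | nil => intro hw hy; exact absurd hy hw
  | cons h p ih =>
    rename_i a c y'
    intro hw hy
    by_cases hcS : c ∈ S
    · refine ⟨c, hT a c h hw hcS, hcS, Walk.cons h Walk.nil, p, ?_, ?_, ?_⟩
      · simp [add_assoc]
      · simp [Walk.length_cons]
      · intro b hbS hbsup
        rw [Walk.support_cons, List.mem_cons] at hbsup
        rcases hbsup with rfl | hb
        · exact absurd hbS hw
        · exact hb
    · obtain ⟨z, hzT, hzS, r, q, hsum, hlen, hsup⟩ := ih hcS hy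
      refine ⟨z, hzT, hzS, Walk.cons h r, q, ?_, ?_, ?_⟩
      · rw [walkWeight_cons, walkWeight_cons, hsum, add_assoc]
      · simp only [Walk.length_cons]; omega
      · intro b hbS hbsup
        rw [Walk.support_cons, List.mem_cons] at hbsup
        rcases hbsup with rfl | hb
        · exact absurd hbS hw
        · exact hsup b hbS hb

/-- Project a walk of `G` between vertices of `S` to a walk of the induced subgraph
on `S`, without increasing the weight and keeping all `S`-vertices of the support. -/
lemma project_walk {V : Type*} {G : SimpleGraph V} (ω : V → V → ℝ≥0∞)
    {u v : V} (huv : G.Adj u v)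
    (S : Set V) (huS : u ∈ S) (hvS : v ∈ S)
    (hcross : ∀ a b, G.Adj a b → a ∉ S → b ∈ S → b ∈ ({u, v} : Set V))
    (hlow : ∀ x z, x ∈ ({u, v} : Set V) → z ∈ ({u, v} : Set V) → x ≠ z →
      ∀ s : G.Walk x z, ω x z ≤ walkWeight ω s) :
    ∀ n (x y : V) (p : G.Walk x y), p.length ≤ n → x ∈ S → y ∈ S →
      ∃ q : (restrictGraph G S).Walk x y, walkWeight ω q ≤ walkWeight ω p ∧
        ∀ b, b ∈ S → b ∈ p.support → b ∈ q.support := by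
  intro n
  induction n with
  | zero =>
    intro x y p hl hx hy
    cases p with
    | nil => exact ⟨Walk.nil, le_rfl, by simp⟩
    | cons h p => simp [Walk.length_cons] at hl
  | succ m ih =>
    intro x y p hl hx hy
    cases p with
    | nil => exact ⟨Walk.nil, le_rfl, by simp⟩
    | cons h p' =>
      rename_i w
      have hl' : p'.length ≤ m := by
        simp only [Walk.length_cons] at hl; omega
      by_cases hwS : w ∈ S
      · obtain ⟨q', hq'w, hq's⟩ := ih w y p' hl' hwS hy
        refine ⟨Walk.cons (show (restrictGraph G S).Adj x w from ⟨h, hx, hwS⟩) q', ?_, ?_⟩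
        · rw [walkWeight_cons, walkWeight_cons]
          exact add_le_add (le_refl _) hq'w
        · intro b hbS hbsup
          rw [Walk.support_cons, List.mem_cons] at hbsup
          rw [Walk.support_cons, List.mem_cons]
          rcases hbsup with rfl | hb
          · exact Or.inl rfl
          · exact Or.inr (hq's b hbS hb)
      · have hxuv : x ∈ ({u, v} : Set V) := hcross w x h.symm hwS hx
        obtain ⟨z, hzT, hzS, r, q, hsum, hlen, hsup⟩ :=
          reach_first ω S {u, v} hcross p' hwS hy
        obtain ⟨q'', hq''w, hq''s⟩ := ih z y q (le_trans hlen hl') hzS hy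
        have hqle : walkWeight ω q ≤ walkWeight ω p' := by
          rw [hsum]; exact le_add_self
        by_cases hxz : x = z
        · subst hxz
          refine ⟨q'', ?_, ?_⟩
          · calc walkWeight ω q'' ≤ walkWeight ω q := hq''w
              _ ≤ walkWeight ω p' := hqle
              _ ≤ ω x w + walkWeight ω p' := le_add_self
              _ = walkWeight ω (Walk.cons h p') := (walkWeight_cons ω h p').symm
          · intro b hbS hbsup
            rw [Walk.support_cons, List.mem_cons] at hbsup
            rcases hbsup with rfl | hb
            · exact q''.start_mem_support
            · exact hq''s b hbS (hsup b hbS hb)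
        · have hadj : G.Adj x z := by
            rcases hxuv with rfl | rfl <;> rcases hzT with rfl | rfl
            · exact absurd rfl hxz
            · exact huv
            · exact huv.symm
            · exact absurd rfl hxz
          have h1 : ω x z ≤ ω x w + walkWeight ω r := by
            have := hlow x z hxuv hzT hxz (Walk.cons h r)
            rwa [walkWeight_cons] at this
          refine ⟨Walk.cons (show (restrictGraph G S).Adj x z from ⟨hadj, hx, hzS⟩) q'', ?_, ?_⟩
          · rw [walkWeight_cons, walkWeight_cons]
            calc ω x z + walkWeight ω q''
                ≤ (ω x w + walkWeight ω r) + walkWeight ω q :=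
                  add_le_add h1 hq''w
              _ = ω x w + (walkWeight ω r + walkWeight ω q) := add_assoc _ _ _
              _ = ω x w + walkWeight ω p' := by rw [hsum]
          · intro b hbS hbsup
            rw [Walk.support_cons, List.mem_cons] at hbsup
            rw [Walk.support_cons, List.mem_cons]
            rcases hbsup with rfl | hb
            · exact Or.inl rfl
            · exact Or.inr (hq''s b hbS (hsup b hbS hb))

lemma beerDist_restrict_le {V : Type*} {G : SimpleGraph V} (ω : V → V → ℝ≥0∞)
    (B S : Set V) (x y : V) :
    beerDist G ω B x y ≤ beerDist (restrictGraph G S) ω (B ∩ S) x y := by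
  refine le_iInf fun q => le_iInf fun hq => ?_
  obtain ⟨b, hbB, hbs⟩ := hq
  have hle : restrictGraph G S ≤ G := fun {a c} h => h.1
  calc beerDist G ω B x y ≤ walkWeight ω (q.mapLe hle) :=
        iInf₂_le _ ⟨b, hbB.1, by rw [support_mapLe]; exact hbs⟩
    _ = walkWeight ω q := walkWeight_mapLe ω hle q

/-- If the vertex set splits as V₁ ∪ V₂ with V₁ ∩ V₂ = {u,v}, where (u,v)
is an edge, no edge joins V₁ \ {u,v} to V₂ \ {u,v}, and dist(u,v) = ω(u,v), then beer
distances between u and v (and from u to itself) split over the two induced subgraphs. -/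
theorem beerDist_split_along_edge {V : Type*} [Fintype V] [DecidableEq V]
    (G : SimpleGraph V) (ω : V → V → ℝ≥0∞) (B : Set V)
    (hsymm : ∀ a b, ω a b = ω b a)
    (hpos : ∀ a b, G.Adj a b → 0 < ω a b ∧ ω a b < ⊤)
    (u v : V) (huv : G.Adj u v)
    (V₁ V₂ : Set V)
    (hunion : V₁ ∪ V₂ = Set.univ)
    (hinter : V₁ ∩ V₂ = {u, v})
    (hsep : ∀ a b, G.Adj a b → a ∈ V₁ \ {u, v} → b ∈ V₂ \ {u, v} → False)
    (hw : gDist G ω u v = ω u v) :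
    beerDist G ω B u v =
      min (beerDist (restrictGraph G V₁) ω (B ∩ V₁) u v)
          (beerDist (restrictGraph G V₂) ω (B ∩ V₂) u v) ∧
    beerDist G ω B u u =
      min (beerDist (restrictGraph G V₁) ω (B ∩ V₁) u u)
          (beerDist (restrictGraph G V₂) ω (B ∩ V₂) u u) := by
  have hmem : ∀ x, x ∈ ({u, v} : Set V) → x ∈ V₁ ∧ x ∈ V₂ := by
    intro x hx
    have hx' : x ∈ V₁ ∩ V₂ := by rw [hinter]; exact hx
    exact hx'
  have hall : ∀ a : V, a ∈ V₁ ∨ a ∈ V₂ := by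
    intro a
    have : a ∈ V₁ ∪ V₂ := by rw [hunion]; trivial
    exact this
  have hcross1 : ∀ a b, G.Adj a b → a ∉ V₁ → b ∈ V₁ → b ∈ ({u, v} : Set V) := by
    intro a b hab ha hb
    by_contra hbn
    have haV2 : a ∈ V₂ := (hall a).resolve_left ha
    have hanuv : a ∉ ({u, v} : Set V) := fun h => ha (hmem a h).1
    exact hsep b a hab.symm ⟨hb, hbn⟩ ⟨haV2, hanuv⟩
  have hcross2 : ∀ a b, G.Adj a b → a ∉ V₂ → b ∈ V₂ → b ∈ ({u, v} : Set V) := by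
    intro a b hab ha hb
    by_contra hbn
    have haV1 : a ∈ V₁ := (hall a).resolve_right ha
    have hanuv : a ∉ ({u, v} : Set V) := fun h => ha (hmem a h).2
    exact hsep a b hab ⟨haV1, hanuv⟩ ⟨hb, hbn⟩
  have h0 : ∀ s : G.Walk u v, ω u v ≤ walkWeight ω s := by
    intro s
    rw [← hw]
    exact iInf_le _ s
  have hlow : ∀ x z, x ∈ ({u, v} : Set V) → z ∈ ({u, v} : Set V) → x ≠ z →
      ∀ s : G.Walk x z, ω x z ≤ walkWeight ω s := by
    intro x z hx hz hxz s
    rcases hx with rfl | rfl <;> rcases hz with rfl | rfl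
    · exact absurd rfl hxz
    · exact h0 s
    · rw [hsymm, ← walkWeight_reverse ω hsymm s]
      exact h0 s.reverse
    · exact absurd rfl hxz
  have huuv : u ∈ ({u, v} : Set V) := Set.mem_insert u {v}
  have hvuv : v ∈ ({u, v} : Set V) := Set.mem_insert_of_mem _ rfl
  have key : ∀ x y : V, x ∈ ({u, v} : Set V) → y ∈ ({u, v} : Set V) →
      beerDist G ω B x y =
        min (beerDist (restrictGraph G V₁) ω (B ∩ V₁) x y)
            (beerDist (restrictGraph G V₂) ω (B ∩ V₂) x y) := by
    intro x y hx hy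
    refine le_antisymm (le_min (beerDist_restrict_le ω B V₁ x y)
      (beerDist_restrict_le ω B V₂ x y)) ?_
    refine le_iInf fun p => le_iInf fun hp => ?_
    obtain ⟨b, hbB, hbs⟩ := hp
    rcases hall b with h1 | h2
    · obtain ⟨q, hqw, hqs⟩ := project_walk ω huv V₁ (hmem u huuv).1 (hmem v hvuv).1
        hcross1 hlow p.length x y p le_rfl (hmem x hx).1 (hmem y hy).1
      exact le_trans (min_le_left _ _)
        (le_trans (iInf₂_le q ⟨b, ⟨hbB, h1⟩, hqs b h1 hbs⟩) hqw)
    · obtain ⟨q, hqw, hqs⟩ := project_walk ω huv V₂ (hmem u huuv).2 (hmem v hvuv).2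
        hcross2 hlow p.length x y p le_rfl (hmem x hx).2 (hmem y hy).2
      exact le_trans (min_le_right _ _)
        (le_trans (iInf₂_le q ⟨b, ⟨hbB, h2⟩, hqs b h2 hbs⟩) hqw)
  exact ⟨key u v huuv hvuv, key u u huuv huuv⟩
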